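/- For a Hermitian positive semi-definite matrix S and Hermitian positive definite matrices R₁ ⪯ R₂, we have log det(I + S R₂^{-1}) ≤ log det(I + S R₁^{-1}); i.e., the achievable rate log det(I + S R^{-1}) is monotonically decreasing in the interference-plus-noise covariance R under the Loewner order. -/

import Mathlib

open Matrix ComplexOrder

/-- For a PSD complex matrix `P`, `det (1 + P)` is a real number `≥ 1`. -/
lemma aux_det_one_add_psd {n : ℕ} {P : Matrix (Fin n) (Fin n) ℂ}
    (hP : P.PosSemidef) : (1 : ℂ) ≤ (1 + P).det := by
  classical
  have hH := hP.isHermitian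
  set U : Matrix (Fin n) (Fin n) ℂ := (hH.eigenvectorUnitary : Matrix (Fin n) (Fin n) ℂ)
    with hUdef
  have hU1 : U * (star U) = 1 := Matrix.mem_unitaryGroup_iff.mp hH.eigenvectorUnitary.2
  have hspec : P = U * diagonal (Complex.ofReal ∘ hH.eigenvalues) * star U :=
    hH.spectral_theorem
  set d : Matrix (Fin n) (Fin n) ℂ := diagonal (Complex.ofReal ∘ hH.eigenvalues) with hddef
  have hsum : 1 + P = U * (1 + d) * star U := by
    rw [Matrix.mul_add, Matrix.add_mul, Matrix.mul_one, hU1, ← hspec]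
  have hdet : (1 + P).det = (1 + d).det := by
    rw [hsum, det_mul, det_mul, mul_comm U.det, mul_assoc, ← det_mul, hU1, det_one, mul_one]
  have hdiag : (1 : Matrix (Fin n) (Fin n) ℂ) + d
      = diagonal (fun i => 1 + (hH.eigenvalues i : ℂ)) := by
    rw [hddef, ← diagonal_one, diagonal_add]
    rfl
  rw [hdet, hdiag, det_diagonal]
  have hcast : (∏ i, (1 + (hH.eigenvalues i : ℂ)))
      = ((∏ i, (1 + hH.eigenvalues i) : ℝ) : ℂ) := by
    push_cast
    rfl
  rw [hcast]
  have h1 : (1 : ℝ) ≤ ∏ i, (1 + hH.eigenvalues i) := by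
    calc (1 : ℝ) = ∏ _i : Fin n, (1 : ℝ) := Finset.prod_const_one.symm
      _ ≤ ∏ i, (1 + hH.eigenvalues i) :=
        Finset.prod_le_prod (fun i _ => zero_le_one)
          (fun i _ => by linarith [hP.eigenvalues_nonneg i])
  calc (1 : ℂ) = ((1 : ℝ) : ℂ) := by norm_num
    _ ≤ _ := by exact_mod_cast h1

/-- For PD `X` and PSD `P`, `det X ≤ det (X + P)` (real parts). -/
lemma aux_det_mono {n : ℕ} {X P : Matrix (Fin n) (Fin n) ℂ}
    (hX : X.PosDef) (hP : P.PosSemidef) : X.det.re ≤ (X + P).det.re := by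
  classical
  set Q := (open scoped MatrixOrder in CFC.sqrt P) with hQdef
  have hQ : Q * Q = P := by
    open scoped MatrixOrder in exact CFC.sqrt_mul_sqrt_self P (Matrix.nonneg_iff_posSemidef.mpr hP)
  have hQH : Qᴴ = Q := by
    open scoped MatrixOrder in exact (Matrix.nonneg_iff_posSemidef.mp (CFC.sqrt_nonneg P)).isHermitian
  have hXinv : X⁻¹.PosSemidef := hX.inv.posSemidef
  have hXu : IsUnit X.det := hX.isUnit.map detMonoidHom
  have hXX : X * X⁻¹ = 1 := mul_nonsing_inv X hXu
  have hfac : X + P = X * (1 + X⁻¹ * Q * Q) := by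
    rw [Matrix.mul_add, Matrix.mul_one, ← Matrix.mul_assoc, ← Matrix.mul_assoc, hXX,
      Matrix.one_mul, hQ]
  have hdet : (X + P).det = X.det * (1 + Q * X⁻¹ * Q).det := by
    rw [hfac, det_mul]
    congr 1
    calc (1 + X⁻¹ * Q * Q).det = (1 + (X⁻¹ * Q) * Q).det := by rw [Matrix.mul_assoc]
      _ = (1 + Q * (X⁻¹ * Q)).det := det_one_add_mul_comm _ _
      _ = (1 + Q * X⁻¹ * Q).det := by rw [Matrix.mul_assoc]
  have hPSD : (Q * X⁻¹ * Q).PosSemidef := by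
    have := hXinv.conjTranspose_mul_mul_same Q
    rwa [hQH] at this
  have h1 : (1 : ℂ) ≤ (1 + Q * X⁻¹ * Q).det := aux_det_one_add_psd hPSD
  have hdX : 0 < X.det := hX.det_pos
  rw [hdet]
  obtain ⟨hre1, him1⟩ := Complex.le_def.mp h1
  obtain ⟨hre0, him0⟩ := Complex.lt_def.mp hdX
  simp only [Complex.one_re, Complex.one_im, Complex.zero_re, Complex.zero_im] at hre1 him1 hre0 him0
  rw [Complex.mul_re, ← him0, ]
  simp only [zero_mul, sub_zero]
  nlinarith

/-- For Hermitian PSD `S` and Hermitian positive definite `R₁ ⪯ R₂`,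
`det (I + S R₂⁻¹) ≤ det (I + S R₁⁻¹)`: the rate `log det (I + S R⁻¹)` is
monotonically decreasing in the interference-plus-noise covariance `R`. -/
theorem stmt9 {M : ℕ} (S R₁ R₂ : Matrix (Fin M) (Fin M) ℂ)
    (hS : S.PosSemidef) (hR₁ : R₁.PosDef) (hR₂ : R₂.PosDef)
    (hle : (R₂ - R₁).PosSemidef) :
    (1 + S * R₂⁻¹).det.re ≤ (1 + S * R₁⁻¹).det.re := by
  classical
  set E := R₂ - R₁ with hEdef
  have hu1 : IsUnit R₁.det := hR₁.isUnit.map detMonoidHom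
  have hu2 : IsUnit R₂.det := hR₂.isUnit.map detMonoidHom
  -- inverse anti-monotonicity: R₁⁻¹ - R₂⁻¹ is PSD
  have key : R₁⁻¹ - R₂⁻¹ = R₂⁻¹ * E * R₂⁻¹ + (E * R₂⁻¹)ᴴ * R₁⁻¹ * (E * R₂⁻¹) := by
    have hE2 : (E * R₂⁻¹)ᴴ = R₂⁻¹ * E := by
      rw [conjTranspose_mul, hR₂.inv.isHermitian.eq, hle.isHermitian.eq]
    have h1 : R₂⁻¹ * E * R₁⁻¹ = R₁⁻¹ - R₂⁻¹ := by
      have h1' : R₂⁻¹ * (R₂ - R₁) * R₁⁻¹ = R₂⁻¹ * R₂ * R₁⁻¹ - R₂⁻¹ * (R₁ * R₁⁻¹) := by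
        noncomm_ring
      rw [hEdef, h1', nonsing_inv_mul R₂ hu2, mul_nonsing_inv R₁ hu1, Matrix.one_mul,
        Matrix.mul_one]
    have step1 : E + E * R₁⁻¹ * E = E * R₁⁻¹ * R₂ := by
      have h2 : R₁ + E = R₂ := by rw [hEdef]; abel
      have h3 : E * R₁⁻¹ * (R₁ + E) = E * (R₁⁻¹ * R₁) + E * R₁⁻¹ * E := by noncomm_ring
      rw [← h2, h3, nonsing_inv_mul R₁ hu1, Matrix.mul_one]
    calc R₁⁻¹ - R₂⁻¹ = R₂⁻¹ * E * R₁⁻¹ := h1.symm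
      _ = R₂⁻¹ * E * R₁⁻¹ * (R₂ * R₂⁻¹) := by
          rw [mul_nonsing_inv R₂ hu2, Matrix.mul_one]
      _ = R₂⁻¹ * (E * R₁⁻¹ * R₂) * R₂⁻¹ := by noncomm_ring
      _ = R₂⁻¹ * (E + E * R₁⁻¹ * E) * R₂⁻¹ := by rw [step1]
      _ = R₂⁻¹ * E * R₂⁻¹ + (R₂⁻¹ * E) * R₁⁻¹ * (E * R₂⁻¹) := by noncomm_ring
      _ = R₂⁻¹ * E * R₂⁻¹ + (E * R₂⁻¹)ᴴ * R₁⁻¹ * (E * R₂⁻¹) := by rw [hE2]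
  have hΔ : (R₁⁻¹ - R₂⁻¹).PosSemidef := by
    rw [key]
    refine Matrix.PosSemidef.add ?_ (hR₁.inv.posSemidef.conjTranspose_mul_mul_same _)
    have := hle.mul_mul_conjTranspose_same R₂⁻¹
    rwa [hR₂.inv.isHermitian.eq] at this
  -- rewrite dets via the square root of S
  set T := (open scoped MatrixOrder in CFC.sqrt S) with hTdef
  have hT : T * T = S := by
    open scoped MatrixOrder in exact CFC.sqrt_mul_sqrt_self S (Matrix.nonneg_iff_posSemidef.mpr hS)
  have hTH : Tᴴ = T := by
    open scoped MatrixOrder in exact (Matrix.nonneg_iff_posSemidef.mp (CFC.sqrt_nonneg S)).isHermitian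
  have hrw : ∀ R : Matrix (Fin M) (Fin M) ℂ,
      (1 + S * R).det = (1 + T * R * T).det := by
    intro R
    calc (1 + S * R).det = (1 + T * (T * R)).det := by
          rw [← hT, Matrix.mul_assoc]
      _ = (1 + (T * R) * T).det := det_one_add_mul_comm _ _
      _ = (1 + T * R * T).det := rfl
  rw [hrw R₂⁻¹, hrw R₁⁻¹]
  have hX : (1 + T * R₂⁻¹ * T).PosDef := by
    refine Matrix.PosDef.add_posSemidef Matrix.PosDef.one ?_
    have := hR₂.inv.posSemidef.conjTranspose_mul_mul_same T
    rwa [hTH] at this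
  have hP : (T * (R₁⁻¹ - R₂⁻¹) * T).PosSemidef := by
    have := hΔ.conjTranspose_mul_mul_same T
    rwa [hTH] at this
  have heq : 1 + T * R₁⁻¹ * T = (1 + T * R₂⁻¹ * T) + T * (R₁⁻¹ - R₂⁻¹) * T := by
    rw [Matrix.mul_sub, Matrix.sub_mul]
    abel
  rw [heq]
  exact aux_det_mono hX hP
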